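/- For every positive integer k and every nonnegative integer n, M_{n,k}(t) = \sum_{j=0}^{\lfloor (n-k)/2 \rfloor} \left( \binom{k+2j}{j} - \binom{k+2j}{j-1} \right) \binom{n}{2j+k} t^{n-2j-k}. -/
import Mathlib


open Polynomial

/-- The weight polynomials `M_{n,k}(t)` of Motzkin paths from `(0,0)` to `(n,k)`. -/
noncomputable def motzkinPoly : ℕ → ℤ → Polynomial ℤ
  | 0, k => if k = 0 then 1 else 0
  | n + 1, k =>
      if k < 0 then 0 else
        motzkinPoly n (k - 1) + X * motzkinPoly n k + motzkinPoly n (k + 1)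
  termination_by n _ => n

/-- For positive `k`:
`M_{n,k}(t) = ∑_j (C(k+2j, j) - C(k+2j, j-1)) · C(n, 2j+k) · t^{n-2j-k}`,
with the convention `C(k, -1) = 0` for the `j = 0` term. -/
def bcoef (k j : ℕ) : ℤ :=
  ((k + 2 * j).choose j : ℤ) - (if j = 0 then 0 else ((k + 2 * j).choose (j - 1) : ℤ))

lemma bcoef_zero (k : ℕ) : bcoef k 0 = 1 := by simp [bcoef]

lemma bcoef_rec (k i : ℕ) : bcoef (k + 1) (i + 1) = bcoef k (i + 1) + bcoef (k + 2) i := by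
  obtain rfl | ⟨i, rfl⟩ : i = 0 ∨ ∃ i', i = i' + 1 := by
    rcases i with _ | i
    exacts [Or.inl rfl, Or.inr ⟨i, rfl⟩]
  · simp [bcoef, Nat.choose_one_right]
    push_cast; ring
  · simp only [bcoef, Nat.add_sub_cancel]
    rw [if_neg (by omega), if_neg (by omega), if_neg (by omega)]
    rw [show k + 1 + 2 * (i + 1 + 1) = (k + 2 * i + 4) + 1 from by ring,
        show k + 2 * (i + 1 + 1) = k + 2 * i + 4 from by ring,
        show k + 2 + 2 * (i + 1) = k + 2 * i + 4 from by ring]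
    rw [Nat.choose_succ_succ (k + 2 * i + 4) (i + 1),
        Nat.choose_succ_succ (k + 2 * i + 4) i]
    push_cast; ring

lemma bcoef_rec0 (i : ℕ) : bcoef 0 (i + 1) = bcoef 1 i := by
  obtain rfl | ⟨i, rfl⟩ : i = 0 ∨ ∃ i', i = i' + 1 := by
    rcases i with _ | i
    exacts [Or.inl rfl, Or.inr ⟨i, rfl⟩]
  · simp [bcoef, Nat.choose_one_right]
  · simp only [bcoef, Nat.add_sub_cancel]
    rw [if_neg (by omega), if_neg (by omega)]
    rw [show 0 + 2 * (i + 1 + 1) = (2 * i + 3) + 1 from by ring,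
        show 1 + 2 * (i + 1) = 2 * i + 3 from by ring]
    rw [Nat.choose_succ_succ (2 * i + 3) (i + 1),
        Nat.choose_succ_succ (2 * i + 3) i]
    have hsymm : (2 * i + 3).choose (i + 1 + 1) = (2 * i + 3).choose (i + 1) := by
      rw [← Nat.choose_symm (show i + 1 + 1 ≤ 2 * i + 3 by omega)]
      congr 1
      omega
    rw [hsymm]
    push_cast; ring

/-- one term of the closed form -/
noncomputable def Tm (n k j : ℕ) : Polynomial ℤ :=
  C (bcoef k j * (n.choose (2 * j + k) : ℤ)) * X ^ (n - 2 * j - k)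

lemma Tm_zero (n k j : ℕ) (h : n < 2 * j + k) : Tm n k j = 0 := by
  simp [Tm, Nat.choose_eq_zero_of_lt h]

lemma xmul (a : ℤ) (e : ℕ) : X * (C a * X ^ e) = C a * X ^ (e + 1) := by
  rw [pow_succ]; ring

lemma term_step (n k j : ℕ) :
    Tm (n + 1) (k + 1) j =
      Tm n k j + X * Tm n (k + 1) j + (if j = 0 then 0 else Tm n (k + 2) (j - 1)) := by
  rcases j with _ | i
  · -- j = 0
    rw [if_pos rfl, add_zero]
    simp only [Tm, Nat.mul_zero, Nat.zero_add, Nat.sub_zero, bcoef_zero, one_mul]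
    rcases lt_trichotomy k n with hkn | rfl | hkn
    · rw [xmul, show n - (k + 1) + 1 = n + 1 - (k + 1) from by omega,
        show n - k = n + 1 - (k + 1) from by omega, Nat.choose_succ_succ n k]
      push_cast
      rw [C_add, add_mul]
    · simp [Nat.choose_succ_self, Nat.choose_self]
    · rw [Nat.choose_eq_zero_of_lt (show n + 1 < k + 1 from by omega),
        Nat.choose_eq_zero_of_lt (show n < k from hkn),
        Nat.choose_eq_zero_of_lt (show n < k + 1 from by omega)]
      simp
  · -- j = i + 1
    rw [if_neg (Nat.succ_ne_zero i), Nat.add_sub_cancel]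
    simp only [Tm,
      show 2 * (i + 1) + (k + 1) = (2 * i + k + 2) + 1 from by ring,
      show 2 * (i + 1) + k = 2 * i + k + 2 from by ring,
      show 2 * i + (k + 2) = 2 * i + k + 2 from by ring,
      show n + 1 - 2 * (i + 1) - (k + 1) = n - (2 * i + k + 2) from by omega,
      show n - 2 * (i + 1) - k = n - (2 * i + k + 2) from by omega,
      show n - 2 * i - (k + 2) = n - (2 * i + k + 2) from by omega]
    rcases lt_trichotomy (2 * i + k + 2) n with hlt | heq | hgt
    · rw [xmul, show n - 2 * (i + 1) - (k + 1) + 1 = n - (2 * i + k + 2) from by omega,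
        Nat.choose_succ_succ n (2 * i + k + 2)]
      have hc : bcoef (k + 1) (i + 1) *
            ((n.choose (2 * i + k + 2) + n.choose (2 * i + k + 2 + 1) : ℕ) : ℤ) =
          bcoef k (i + 1) * (n.choose (2 * i + k + 2) : ℤ) +
          bcoef (k + 1) (i + 1) * (n.choose (2 * i + k + 2 + 1) : ℤ) +
          bcoef (k + 2) i * (n.choose (2 * i + k + 2) : ℤ) := by
        rw [bcoef_rec k i]
        push_cast
        ring
      rw [hc, C_add, C_add, add_mul, add_mul]
    · have hz : n.choose (2 * i + k + 2 + 1) = 0 := by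
        rw [heq]
        exact Nat.choose_succ_self n
      rw [hz, Nat.choose_succ_succ n (2 * i + k + 2), hz]
      have hc : bcoef (k + 1) (i + 1) * ((n.choose (2 * i + k + 2) + 0 : ℕ) : ℤ) =
          bcoef k (i + 1) * (n.choose (2 * i + k + 2) : ℤ) +
          bcoef (k + 2) i * (n.choose (2 * i + k + 2) : ℤ) := by
        rw [bcoef_rec k i]
        push_cast
        ring
      rw [hc, C_add, add_mul]
      push_cast
      simp
    · rw [Nat.choose_eq_zero_of_lt (show n + 1 < 2 * i + k + 2 + 1 from by omega),
        Nat.choose_eq_zero_of_lt (show n < 2 * i + k + 2 from hgt),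
        Nat.choose_eq_zero_of_lt (show n < 2 * i + k + 2 + 1 from by omega)]
      simp

lemma term_step0 (n j : ℕ) :
    Tm (n + 1) 0 j = X * Tm n 0 j + (if j = 0 then 0 else Tm n 1 (j - 1)) := by
  rcases j with _ | i
  · rw [if_pos rfl, add_zero]
    simp [Tm, bcoef_zero]
    ring
  · rw [if_neg (Nat.succ_ne_zero i), Nat.add_sub_cancel]
    simp only [Tm,
      show 2 * (i + 1) + 0 = (2 * i + 1) + 1 from by ring,
      show n + 1 - 2 * (i + 1) - 0 = n - (2 * i + 1) from by omega,
      show n - 2 * i - 1 = n - (2 * i + 1) from by omega]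
    rcases lt_trichotomy (2 * i + 1) n with hlt | heq | hgt
    · rw [xmul, show n - 2 * (i + 1) - 0 + 1 = n - (2 * i + 1) from by omega,
        Nat.choose_succ_succ n (2 * i + 1)]
      have hc : bcoef 0 (i + 1) * ((n.choose (2 * i + 1) + n.choose (2 * i + 1 + 1) : ℕ) : ℤ) =
          bcoef 0 (i + 1) * (n.choose (2 * i + 1 + 1) : ℤ) +
          bcoef 1 i * (n.choose (2 * i + 1) : ℤ) := by
        rw [bcoef_rec0 i]
        push_cast
        ring
      rw [hc, C_add, add_mul]
    · have hz : n.choose (2 * i + 1 + 1) = 0 := by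
        rw [heq]
        exact Nat.choose_succ_self n
      rw [Nat.choose_succ_succ n (2 * i + 1), hz]
      have hc : bcoef 0 (i + 1) * ((n.choose (2 * i + 1) + 0 : ℕ) : ℤ) =
          bcoef 1 i * (n.choose (2 * i + 1) : ℤ) := by
        rw [bcoef_rec0 i]
        push_cast
        ring
      rw [hc]
      push_cast
      simp
    · rw [Nat.choose_eq_zero_of_lt (show n + 1 < 2 * i + 1 + 1 from by omega),
        Nat.choose_eq_zero_of_lt (show n < 2 * i + 1 from hgt),
        Nat.choose_eq_zero_of_lt (show n < 2 * i + 1 + 1 from by omega)]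
      simp

lemma motzkin_neg (n : ℕ) (k : ℤ) (hk : k < 0) : motzkinPoly n k = 0 := by
  cases n with
  | zero => simp only [motzkinPoly]; rw [if_neg (by omega)]
  | succ n => simp only [motzkinPoly]; rw [if_pos hk]

lemma S_eq : ∀ (n k : ℕ), motzkinPoly n (k : ℤ) = ∑ j ∈ Finset.range (n + 1), Tm n k j := by
  intro n
  induction n with
  | zero =>
    intro k
    rcases k with _ | k
    · simp [motzkinPoly, Tm, bcoef_zero]
    · simp only [motzkinPoly]
      rw [if_neg (by exact_mod_cast Nat.succ_ne_zero k), Finset.sum_range_one]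
      simp [Tm]
  | succ n ih =>
    intro k
    have hrec : motzkinPoly (n + 1) (k : ℤ) =
        motzkinPoly n ((k : ℤ) - 1) + X * motzkinPoly n (k : ℤ) + motzkinPoly n ((k : ℤ) + 1) := by
      simp only [motzkinPoly]
      rw [if_neg (not_lt.mpr (Int.natCast_nonneg k))]
    have ext : ∀ K : ℕ, ∑ j ∈ Finset.range (n + 2), Tm n K j
        = ∑ j ∈ Finset.range (n + 1), Tm n K j := by
      intro K
      rw [Finset.sum_range_succ, Tm_zero n K (n + 1) (by omega), add_zero]
    have shift : ∀ K : ℕ, ∑ j ∈ Finset.range (n + 2), (if j = 0 then 0 else Tm n K (j - 1))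
        = ∑ j ∈ Finset.range (n + 1), Tm n K j := by
      intro K
      rw [Finset.sum_range_succ' (fun j => if j = 0 then 0 else Tm n K (j - 1)) (n + 1)]
      simp
    rcases k with _ | k
    · rw [hrec, motzkin_neg n (((0 : ℕ) : ℤ) - 1) (by norm_num),
        show ((0 : ℕ) : ℤ) + 1 = ((1 : ℕ) : ℤ) from by norm_num, ih 0, ih 1, zero_add,
        Finset.sum_congr rfl (fun j _ => term_step0 n j), Finset.sum_add_distrib,
        ← Finset.mul_sum, ext 0, shift 1]
    · rw [hrec, show ((k + 1 : ℕ) : ℤ) - 1 = ((k : ℕ) : ℤ) from by push_cast; ring,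
        show ((k + 1 : ℕ) : ℤ) + 1 = ((k + 2 : ℕ) : ℤ) from by push_cast; ring,
        ih k, ih (k + 1), ih (k + 2),
        Finset.sum_congr rfl (fun j _ => term_step n k j), Finset.sum_add_distrib,
        Finset.sum_add_distrib, ← Finset.mul_sum, ext k, ext (k + 1), shift (k + 2)]

/-- For positive `k`:
`M_{n,k}(t) = ∑_j (C(k+2j, j) - C(k+2j, j-1)) · C(n, 2j+k) · t^{n-2j-k}`,
with the convention `C(k, -1) = 0` for the `j = 0` term. -/
theorem motzkinPoly_closed_form_pos (k : ℕ) (hk : 0 < k) (n : ℕ) :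
    motzkinPoly n (k : ℤ) =
      ∑ j ∈ Finset.range ((n - k) / 2 + 1),
        C ((((k + 2 * j).choose j : ℤ) -
              (if j = 0 then 0 else ((k + 2 * j).choose (j - 1) : ℤ))) *
            (n.choose (2 * j + k) : ℤ)) * X ^ (n - 2 * j - k) := by
  rw [S_eq n k]
  rw [← Finset.sum_subset (show Finset.range ((n - k) / 2 + 1) ⊆ Finset.range (n + 1) by
      intro x hx
      simp only [Finset.mem_range] at *
      omega)
    (fun j _ hj => Tm_zero n k j (by
      simp only [Finset.mem_range] at hj
      omega))]
  exact Finset.sum_congr rfl (fun j _ => rfl)
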